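/- Let c_d be the number of non-crossing multigraphs (0-outerplanar graphs, multiple edges allowed, no loops) on vertices 1,...,m with degree sequence d = (d_1,...,d_m). Then c_d satisfies the recursion c_d = Σ_{j=|d_{m−1}−d_m|, step 2}^{d_{m−1}+d_m} c_{(d_1,...,d_{m−2}, j)} for m ≥ 2, with initial condition c_{(d)} = 1 if d = 0 and 0 otherwise. -/

import Mathlib

open Finset

/-- The number of non-crossing multigraphs (0-outerplanar graphs: multiple
edges allowed, no loops, vertices on a line, edges drawable in the upper
half-plane without crossings) on vertices Fin m with degree sequence d.
A multigraph is encoded by its symmetric multiplicity matrix A with zero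
diagonal; non-crossing means there is no pattern a < b < c < e with an edge
between a,c and an edge between b,e. -/
noncomputable def ncCount (m : ℕ) (d : Fin m → ℕ) : ℕ :=
  Nat.card {A : Fin m → Fin m → ℕ //
    (∀ i j, A i j = A j i) ∧ (∀ i, A i i = 0) ∧
    (∀ a b c e : Fin m, a < b → b < c → c < e → A a c = 0 ∨ A b e = 0) ∧
    ∀ i, ∑ j, A i j = d i}

set_option maxHeartbeats 4000000

namespace NC11

def pre (g : ℕ → ℕ) (n : ℕ) : ℕ := ∑ l ∈ range n, g l
def Bf (g : ℕ → ℕ) (s i : ℕ) : ℕ := min (pre g (i+1)) s - min (pre g i) s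
def Cf (g : ℕ → ℕ) (s i : ℕ) : ℕ := g i - Bf g s i

def Ok (n : ℕ) (d : Fin n → ℕ) (A : Fin n → Fin n → ℕ) : Prop :=
  (∀ i j, A i j = A j i) ∧ (∀ i, A i i = 0) ∧
  (∀ a b c e : Fin n, a < b → b < c → c < e → A a c = 0 ∨ A b e = 0) ∧
  ∀ i, ∑ j, A i j = d i

lemma ncCount_eq (n : ℕ) (d : Fin n → ℕ) : ncCount n d = Nat.card {A // Ok n d A} := rfl

variable {m : ℕ}

def um : Fin (m+2) := ⟨m, Nat.lt_succ_of_lt (Nat.lt_succ_self m)⟩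
def vm : Fin (m+2) := ⟨m+1, Nat.lt_succ_self (m+1)⟩

@[simp] lemma um_val : (um (m := m) : ℕ) = m := rfl
@[simp] lemma vm_val : (vm (m := m) : ℕ) = m + 1 := rfl

def merge (A : Fin (m+2) → Fin (m+2) → ℕ) (i j : Fin (m+1)) : ℕ :=
  if hi : (i : ℕ) < m then
    if hj : (j : ℕ) < m then A i.castSucc j.castSucc
    else A i.castSucc um + A i.castSucc vm
  else
    if hj : (j : ℕ) < m then A j.castSucc um + A j.castSucc vm
    else 0

lemma merge_lt_lt (A : Fin (m+2) → Fin (m+2) → ℕ) (i j : Fin (m+1))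
    (hi : (i:ℕ) < m) (hj : (j:ℕ) < m) :
    merge A i j = A i.castSucc j.castSucc := by simp [merge, hi, hj]

lemma merge_lt_last (A : Fin (m+2) → Fin (m+2) → ℕ) (i : Fin (m+1)) (hi : (i:ℕ) < m) :
    merge A i (Fin.last m) = A i.castSucc um + A i.castSucc vm := by
  simp [merge, hi]

lemma merge_last_lt (A : Fin (m+2) → Fin (m+2) → ℕ) (j : Fin (m+1)) (hj : (j:ℕ) < m) :
    merge A (Fin.last m) j = A j.castSucc um + A j.castSucc vm := by
  simp [merge, hj]

lemma merge_last_last (A : Fin (m+2) → Fin (m+2) → ℕ) :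
    merge A (Fin.last m) (Fin.last m) = 0 := by simp [merge]

lemma sum1 (f : Fin (m+1) → ℕ) :
    ∑ j, f j = ∑ j : Fin m, f j.castSucc + f (Fin.last m) :=
  Fin.sum_univ_castSucc f

lemma sum2 (f : Fin (m+2) → ℕ) :
    ∑ j, f j = ∑ j : Fin m, f j.castSucc.castSucc + f um + f vm := by
  rw [Fin.sum_univ_castSucc, Fin.sum_univ_castSucc]
  rfl

lemma k_le_left (d : Fin (m+2) → ℕ) (A : Fin (m+2) → Fin (m+2) → ℕ) (hA : Ok (m+2) d A) :
    A um vm ≤ d um := by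
  have := hA.2.2.2 um
  calc A um vm ≤ ∑ j, A um j :=
        Finset.single_le_sum (fun j _ => Nat.zero_le _) (mem_univ _)
    _ = _ := this

lemma k_le_right (d : Fin (m+2) → ℕ) (A : Fin (m+2) → Fin (m+2) → ℕ) (hA : Ok (m+2) d A) :
    A um vm ≤ d vm := by
  rw [hA.1]
  have := hA.2.2.2 vm
  calc A vm um ≤ ∑ j, A vm j :=
        Finset.single_le_sum (fun j _ => Nat.zero_le _) (mem_univ _)
    _ = _ := this

lemma merge_ok (d : Fin (m+2) → ℕ) (A : Fin (m+2) → Fin (m+2) → ℕ) (hA : Ok (m+2) d A) :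
    Ok (m+1) (Fin.snoc (fun i : Fin m => d i.castSucc.castSucc)
      (d um + d vm - 2 * A um vm)) (merge A) := by
  obtain ⟨hsym, hdiag, hnc, hdeg⟩ := hA
  refine ⟨?_, ?_, ?_, ?_⟩
  · intro i j
    unfold merge
    split_ifs <;> first | rfl | exact hsym _ _
  · intro i
    unfold merge
    split_ifs <;> first | rfl | exact hdiag _
  · intro a b c e hab hbc hce
    rw [Fin.lt_def] at hab hbc hce
    have hav : (a:ℕ) < m := by omega
    have hbv : (b:ℕ) < m := by omega
    have hcv : (c:ℕ) < m := by have := e.isLt; omega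
    rw [merge_lt_lt A a c hav hcv]
    by_cases hev : (e:ℕ) < m
    · rw [merge_lt_lt A b e hbv hev]
      exact hnc _ _ _ _ (by rw [Fin.lt_def]; simpa using hab)
        (by rw [Fin.lt_def]; simpa using hbc) (by rw [Fin.lt_def]; simpa using hce)
    · have he : e = Fin.last m := Fin.ext (by simp only [Fin.val_last]; have := e.isLt; omega)
      subst he
      rw [merge_lt_last A b hbv]
      have h1 := hnc a.castSucc b.castSucc c.castSucc um
        (by rw [Fin.lt_def]; simpa using hab) (by rw [Fin.lt_def]; simpa using hbc)
        (by rw [Fin.lt_def]; simpa using hcv)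
      have h2 := hnc a.castSucc b.castSucc c.castSucc vm
        (by rw [Fin.lt_def]; simpa using hab) (by rw [Fin.lt_def]; simpa using hbc)
        (by rw [Fin.lt_def]; simp only [Fin.coe_castSucc, vm_val]; omega)
      rcases h1 with h1 | h1
      · exact Or.inl h1
      · rcases h2 with h2 | h2
        · exact Or.inl h2
        · exact Or.inr (by omega)
  · intro i
    by_cases hi : (i:ℕ) < m
    · have e1 : ∑ j, merge A i j
          = ∑ jc : Fin m, A i.castSucc jc.castSucc.castSucc
            + (A i.castSucc um + A i.castSucc vm) := by
        rw [sum1]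
        congr 1
        · exact Finset.sum_congr rfl fun jc _ => merge_lt_lt A i jc.castSucc hi jc.isLt
        · exact merge_lt_last A i hi
      have e2 := hdeg i.castSucc
      rw [sum2] at e2
      have hival : i = (⟨(i:ℕ), hi⟩ : Fin m).castSucc := Fin.ext rfl
      conv_rhs => rw [hival, Fin.snoc_castSucc]
      have h7 : (⟨(i:ℕ), hi⟩ : Fin m).castSucc.castSucc = i.castSucc := Fin.ext rfl
      rw [h7, e1]
      omega
    · have hil : i = Fin.last m := Fin.ext (by simp only [Fin.val_last]; have := i.isLt; omega)
      subst hil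
      rw [Fin.snoc_last]
      have e1 : ∑ j, merge A (Fin.last m) j
          = ∑ jc : Fin m, (A jc.castSucc.castSucc um
              + A jc.castSucc.castSucc vm) := by
        rw [sum1, merge_last_last]
        rw [Finset.sum_congr rfl fun jc _ => merge_last_lt A jc.castSucc jc.isLt]
        omega
      have e2 := hdeg (um : Fin (m+2))
      rw [sum2] at e2
      have e3 := hdeg (vm : Fin (m+2))
      rw [sum2] at e3
      have hdm : A (um : Fin (m+2)) um = 0 := hdiag _
      have hdl : A (vm : Fin (m+2)) vm = 0 := hdiag _
      have hsy : A (vm : Fin (m+2)) um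
          = A um vm := hsym _ _
      have e4 : ∑ jc : Fin m, A jc.castSucc.castSucc um
          = ∑ jc : Fin m, A (um : Fin (m+2)) jc.castSucc.castSucc :=
        Finset.sum_congr rfl fun jc _ => hsym _ _
      have e5 : ∑ jc : Fin m, A jc.castSucc.castSucc vm
          = ∑ jc : Fin m, A (vm : Fin (m+2)) jc.castSucc.castSucc :=
        Finset.sum_congr rfl fun jc _ => hsym _ _
      rw [e1]
      rw [Finset.sum_add_distrib]
      rw [e4, e5]
      have hk1 := k_le_left d A ⟨hsym, hdiag, hnc, hdeg⟩
      have hk2 := k_le_right d A ⟨hsym, hdiag, hnc, hdeg⟩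
      omega


def gcol (A' : Fin (m+1) → Fin (m+1) → ℕ) (l : ℕ) : ℕ :=
  if h : l < m then A' ⟨l, by omega⟩ (Fin.last m) else 0

lemma gcol_lt (A' : Fin (m+1) → Fin (m+1) → ℕ) (l : ℕ) (h : l < m) :
    gcol A' l = A' ⟨l, by omega⟩ (Fin.last m) := by simp [gcol, h]

def split (A' : Fin (m+1) → Fin (m+1) → ℕ) (s k : ℕ) (i j : Fin (m+2)) : ℕ :=
  if hi : (i : ℕ) < m then
    if hj : (j : ℕ) < m then A' ⟨i, by omega⟩ ⟨j, by omega⟩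
    else if (j : ℕ) = m then Cf (gcol A') s i
    else Bf (gcol A') s i
  else if (i : ℕ) = m then
    if hj : (j : ℕ) < m then Cf (gcol A') s j
    else if (j : ℕ) = m then 0 else k
  else
    if hj : (j : ℕ) < m then Bf (gcol A') s j
    else if (j : ℕ) = m then k else 0

variable (A' : Fin (m+1) → Fin (m+1) → ℕ) (s k : ℕ)

lemma sp_ll {i j : Fin (m+2)} (hi : (i:ℕ) < m) (hj : (j:ℕ) < m) :
    split A' s k i j = A' ⟨i, by omega⟩ ⟨j, by omega⟩ := by simp [split, hi, hj]

lemma sp_lm {i : Fin (m+2)} (hi : (i:ℕ) < m) :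
    split A' s k i um = Cf (gcol A') s i := by simp [split, hi]

lemma sp_lv {i : Fin (m+2)} (hi : (i:ℕ) < m) :
    split A' s k i vm = Bf (gcol A') s i := by simp [split, hi]

lemma sp_ml {j : Fin (m+2)} (hj : (j:ℕ) < m) :
    split A' s k um j = Cf (gcol A') s j := by simp [split, hj]

lemma sp_mm : split A' s k um um = 0 := by simp [split]

lemma sp_mv : split A' s k um vm = k := by simp [split]

lemma sp_vl {j : Fin (m+2)} (hj : (j:ℕ) < m) :
    split A' s k vm j = Bf (gcol A') s j := by simp [split, hj]

lemma sp_vm : split A' s k vm um = k := by simp [split]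

lemma sp_vv : split A' s k vm vm = 0 := by simp [split]


lemma pre_succ (g : ℕ → ℕ) (n : ℕ) : pre g (n+1) = pre g n + g n :=
  sum_range_succ g n

lemma pre_mono (g : ℕ → ℕ) {a b : ℕ} (h : a ≤ b) : pre g a ≤ pre g b :=
  sum_le_sum_of_subset (range_subset_range.2 h)

lemma Bf_le (g : ℕ → ℕ) (s i : ℕ) : Bf g s i ≤ g i := by
  have := pre_succ g i; unfold Bf; omega

lemma Bf_add_Cf (g : ℕ → ℕ) (s i : ℕ) : Bf g s i + Cf g s i = g i := by
  have := Bf_le g s i; unfold Cf; omega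

lemma Cf_le (g : ℕ → ℕ) (s i : ℕ) : Cf g s i ≤ g i := Nat.sub_le _ _

lemma sum_Bf (g : ℕ → ℕ) (s n : ℕ) : ∑ l ∈ range n, Bf g s l = min (pre g n) s := by
  induction n with
  | zero => simp [pre]
  | succ n ih =>
    rw [sum_range_succ, ih]
    have h1 := pre_succ g n
    have h2 := pre_mono g (Nat.le_succ n)
    unfold Bf; omega

lemma Cf_Bf_constraint (g : ℕ → ℕ) (s a b : ℕ) (hab : a < b) :
    Cf g s a = 0 ∨ Bf g s b = 0 := by
  by_contra h
  push_neg at h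
  have h1 : Bf g s a < g a := by have := Bf_add_Cf g s a; unfold Cf at h; omega
  have h2 : s < pre g (a+1) := by
    have := pre_succ g a; unfold Bf at h1; omega
  have h3 : pre g b < s := by
    have := Bf_le g s b
    have := pre_succ g b
    unfold Bf at h; omega
  have := pre_mono g (show a + 1 ≤ b by omega)
  omega

lemma sum_eq_min (g B C : ℕ → ℕ) (n s : ℕ)
    (hBC : ∀ i, B i + C i = g i)
    (hs : ∑ l ∈ range n, B l = s)
    (hcon : ∀ a b, a < b → C a = 0 ∨ B b = 0) :
    ∀ i, i ≤ n → ∑ l ∈ range i, B l = min (pre g i) s := by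
  intro i hi
  have h1 : ∑ l ∈ range i, B l ≤ pre g i :=
    sum_le_sum (fun l _ => by have := hBC l; omega)
  have h2 : ∑ l ∈ range i, B l ≤ s := by
    rw [← hs]; exact sum_le_sum_of_subset (range_subset_range.2 hi)
  rcases eq_or_lt_of_le h2 with h | h
  · omega
  · have hsplit : ∑ l ∈ range n, B l = ∑ l ∈ range i, B l + ∑ l ∈ Ico i n, B l := by
      rw [range_eq_Ico, ← sum_Ico_consecutive _ (Nat.zero_le i) hi, ← range_eq_Ico]
    have hex : ∃ b, i ≤ b ∧ b < n ∧ B b ≠ 0 := by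
      by_contra hc
      push_neg at hc
      have : ∑ l ∈ Ico i n, B l = 0 := by
        apply sum_eq_zero
        intro l hl
        rw [mem_Ico] at hl
        exact hc l hl.1 hl.2
      omega
    obtain ⟨b, hib, hbn, hBb⟩ := hex
    have : ∑ l ∈ range i, B l = pre g i := by
      apply sum_congr rfl
      intro l hl
      rw [mem_range] at hl
      have := hcon l b (by omega)
      have := hBC l
      omega
    omega

lemma eq_Bf (g B C : ℕ → ℕ) (n s : ℕ)
    (hBC : ∀ i, B i + C i = g i)
    (hs : ∑ l ∈ range n, B l = s)
    (hcon : ∀ a b, a < b → C a = 0 ∨ B b = 0) :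
    ∀ i, i < n → B i = Bf g s i := by
  intro i hin
  have h1 := sum_eq_min g B C n s hBC hs hcon i (by omega)
  have h2 := sum_eq_min g B C n s hBC hs hcon (i+1) (by omega)
  rw [sum_range_succ, h1] at h2
  unfold Bf; omega

lemma pre_gcol (hsym : ∀ i j, A' i j = A' j i) (hdiag : ∀ i, A' i i = 0) :
    pre (gcol A') m = ∑ j, A' (Fin.last m) j := by
  rw [sum1, hdiag, add_zero, pre, ← Fin.sum_univ_eq_sum_range]
  refine Finset.sum_congr rfl fun jc _ => ?_
  rw [gcol_lt A' jc jc.isLt, hsym]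
  exact congrArg (A' (Fin.last m)) (Fin.ext rfl)

lemma split_ok (d : Fin (m+2) → ℕ) (t : ℕ) (ht : t ≤ min (d um) (d vm))
    (hA' : Ok (m+1) (Fin.snoc (fun i : Fin m => d i.castSucc.castSucc)
      (max (d um) (d vm) - min (d um) (d vm) + 2 * t)) A') :
    Ok (m+2) d
      (split A' (d vm - (min (d um) (d vm) - t)) (min (d um) (d vm) - t)) := by
  obtain ⟨hsym, hdiag, hnc, hdeg⟩ := hA'
  set P := d um with hP
  set Q := d vm with hQ
  set μ := min P Q with hμ
  set M := max P Q with hM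
  set k := μ - t with hk
  set s := Q - k with hs
  set J := M - μ + 2 * t with hJ
  have hpre : pre (gcol A') m = J := by
    rw [pre_gcol A' hsym hdiag, hdeg, Fin.snoc_last]
  have hsJ : s ≤ J := by omega
  have hBsum : ∑ l ∈ range m, Bf (gcol A') s l = s := by
    rw [sum_Bf, hpre]; omega
  have hCsum : ∑ l ∈ range m, Cf (gcol A') s l = J - s := by
    have h1 : ∑ l ∈ range m, (Bf (gcol A') s l + Cf (gcol A') s l) = pre (gcol A') m :=
      Finset.sum_congr rfl fun l _ => Bf_add_Cf (gcol A') s l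
    rw [sum_add_distrib, hBsum, hpre] at h1
    omega
  refine ⟨?_, ?_, ?_, ?_⟩
  · intro i j
    unfold split
    split_ifs <;>
      first
        | rfl
        | exact hsym _ _
        | omega
  · intro i
    unfold split
    split_ifs <;> first | rfl | exact hdiag _ | omega
  · intro a b c e hab hbc hce
    rw [Fin.lt_def] at hab hbc hce
    have he2 := e.isLt
    have hbm : (b:ℕ) < m := by omega
    have ham : (a:ℕ) < m := by omega
    by_cases hc : (c:ℕ) < m
    · have hacv : split A' s k a c = A' ⟨a, by omega⟩ ⟨c, by omega⟩ := sp_ll A' s k ham hc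
      by_cases he : (e:ℕ) < m
      · rw [hacv, sp_ll A' s k hbm he]
        exact hnc ⟨a, by omega⟩ ⟨b, by omega⟩ ⟨c, by omega⟩ ⟨e, by omega⟩
          (by rw [Fin.lt_def]; exact hab) (by rw [Fin.lt_def]; exact hbc)
          (by rw [Fin.lt_def]; exact hce)
      · have h5 := hnc ⟨a, by omega⟩ ⟨b, by omega⟩ ⟨c, by omega⟩ (Fin.last m)
          (by rw [Fin.lt_def]; exact hab) (by rw [Fin.lt_def]; exact hbc)
          (by rw [Fin.lt_def]; exact hc)
        have hgb : gcol A' (b:ℕ) = A' ⟨b, by omega⟩ (Fin.last m) := gcol_lt A' b hbm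
        have hBle := Bf_le (gcol A') s (b:ℕ)
        have hCle := Cf_le (gcol A') s (b:ℕ)
        by_cases he1 : (e:ℕ) = m
        · have : e = um := Fin.ext he1
          subst this
          rw [hacv, sp_lm A' s k hbm]
          rcases h5 with h5 | h5
          · exact Or.inl (by omega)
          · exact Or.inr (by omega)
        · have : e = vm := Fin.ext (by simp only [vm_val]; omega)
          subst this
          rw [hacv, sp_lv A' s k hbm]
          rcases h5 with h5 | h5
          · exact Or.inl (by omega)
          · exact Or.inr (by omega)
    · have hcm : c = um := Fin.ext (by simp only [um_val]; omega)
      have hem : e = vm := Fin.ext (by simp only [vm_val]; omega)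
      subst hcm hem
      rw [sp_lm A' s k ham, sp_lv A' s k hbm]
      exact Cf_Bf_constraint (gcol A') s a b hab
  · intro i
    have hi2 := i.isLt
    by_cases hi : (i:ℕ) < m
    · obtain ⟨icc, rfl⟩ : ∃ icc : Fin m, icc.castSucc.castSucc = i :=
        ⟨⟨(i:ℕ), hi⟩, Fin.ext rfl⟩
      have hiv : ((icc.castSucc.castSucc : Fin (m+2)) : ℕ) = (icc : ℕ) := rfl
      have key : ∀ jc : Fin m,
          split A' s k icc.castSucc.castSucc jc.castSucc.castSucc
            = A' icc.castSucc jc.castSucc := by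
        intro jc
        rw [sp_ll A' s k (by simpa using icc.isLt) (by simpa using jc.isLt)]
        exact congrArg₂ A' (Fin.ext rfl) (Fin.ext rfl)
      rw [sum2 (fun j => split A' s k icc.castSucc.castSucc j)]
      rw [Finset.sum_congr rfl fun jc _ => key jc,
        sp_lm A' s k (by simpa using icc.isLt), sp_lv A' s k (by simpa using icc.isLt)]
      have e2 := hdeg icc.castSucc
      rw [sum1, Fin.snoc_castSucc] at e2
      have e3 : A' icc.castSucc (Fin.last m) = 0 ∨ True := Or.inr trivial
      have e4 : Bf (gcol A') s ((icc.castSucc.castSucc : Fin (m+2)) : ℕ)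
            + Cf (gcol A') s ((icc.castSucc.castSucc : Fin (m+2)) : ℕ)
          = A' icc.castSucc (Fin.last m) := by
        rw [Bf_add_Cf, gcol_lt A' _ (by simpa using icc.isLt)]
        exact congrArg (fun x => A' x (Fin.last m)) (Fin.ext rfl)
      omega
    · have he4 : ∑ l ∈ range m, Bf (gcol A') s l = ∑ jc : Fin m, Bf (gcol A') s ((jc.castSucc.castSucc : Fin (m+2)) : ℕ) :=
        (Fin.sum_univ_eq_sum_range (fun l => Bf (gcol A') s l) m).symm
      have he5 : ∑ l ∈ range m, Cf (gcol A') s l = ∑ jc : Fin m, Cf (gcol A') s ((jc.castSucc.castSucc : Fin (m+2)) : ℕ) :=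
        (Fin.sum_univ_eq_sum_range (fun l => Cf (gcol A') s l) m).symm
      by_cases hi1 : (i:ℕ) = m
      · have : i = um := Fin.ext hi1
        subst this
        rw [sum2 (fun j => split A' s k um j)]
        rw [Finset.sum_congr rfl fun jc _ => sp_ml A' s k (j := jc.castSucc.castSucc) (by simpa using jc.isLt),
          sp_mm, sp_mv]
        rw [← he5, hCsum]
        omega
      · have : i = vm := Fin.ext (by simp only [vm_val]; omega)
        subst this
        rw [sum2 (fun j => split A' s k vm j)]
        rw [Finset.sum_congr rfl fun jc _ => sp_vl A' s k (j := jc.castSucc.castSucc) (by simpa using jc.isLt),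
          sp_vm, sp_vv]
        rw [← he4, hBsum]
        omega


lemma split_merge (d : Fin (m+2) → ℕ) (A : Fin (m+2) → Fin (m+2) → ℕ)
    (hA : Ok (m+2) d A) :
    split (merge A) (d vm - A um vm) (A um vm) = A := by
  obtain ⟨hsym, hdiag, hnc, hdeg⟩ := hA
  have hk1 := k_le_left d A ⟨hsym, hdiag, hnc, hdeg⟩
  have hk2 := k_le_right d A ⟨hsym, hdiag, hnc, hdeg⟩
  -- the B and C functions
  have hBC : ∀ l : ℕ,
      (if h : l < m then A ⟨l, by omega⟩ vm else 0)
        + (if h : l < m then A ⟨l, by omega⟩ um else 0) = gcol (merge A) l := by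
    intro l
    by_cases hl : l < m
    · rw [dif_pos hl, dif_pos hl, gcol_lt (merge A) l hl,
        merge_lt_last A ⟨l, by omega⟩ hl]
      have e1 : (⟨l, by omega⟩ : Fin (m+1)).castSucc = (⟨l, by omega⟩ : Fin (m+2)) :=
        Fin.ext rfl
      rw [e1]
      omega
    · rw [dif_neg hl, dif_neg hl, gcol, dif_neg hl]
  have hsum : ∑ l ∈ range m, (if h : l < m then A ⟨l, by omega⟩ vm else 0)
      = d vm - A um vm := by
    have h1 : ∑ l ∈ range m, (if h : l < m then A ⟨l, by omega⟩ vm else 0)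
        = ∑ jc : Fin m, A vm jc.castSucc.castSucc := by
      rw [← Fin.sum_univ_eq_sum_range]
      refine Finset.sum_congr rfl fun jc _ => ?_
      rw [dif_pos jc.isLt, hsym]
      exact congrArg (A vm) (Fin.ext rfl)
    have h2 := hdeg vm
    rw [sum2] at h2
    have h3 : A vm vm = 0 := hdiag vm
    have h4 : A vm um = A um vm := hsym _ _
    omega
  have hcon : ∀ a b : ℕ, a < b →
      (if h : a < m then A ⟨a, by omega⟩ um else 0) = 0
        ∨ (if h : b < m then A ⟨b, by omega⟩ vm else 0) = 0 := by
    intro a b hab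
    by_cases hb : b < m
    · have ha : a < m := by omega
      rw [dif_pos ha, dif_pos hb]
      exact hnc ⟨a, by omega⟩ ⟨b, by omega⟩ um vm
        (by rw [Fin.lt_def]; exact hab) (by rw [Fin.lt_def]; simpa using hb)
        (by rw [Fin.lt_def]; simp)
    · exact Or.inr (dif_neg hb)
  have hBf := eq_Bf (gcol (merge A))
    (fun l => if h : l < m then A ⟨l, by omega⟩ vm else 0)
    (fun l => if h : l < m then A ⟨l, by omega⟩ um else 0)
    m (d vm - A um vm) hBC hsum hcon
  funext i j
  have hi2 := i.isLt
  have hj2 := j.isLt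
  by_cases hi : (i:ℕ) < m
  · by_cases hj : (j:ℕ) < m
    · rw [sp_ll (merge A) _ _ hi hj, merge_lt_lt A _ _ hi hj]
      exact congrArg₂ A (Fin.ext rfl) (Fin.ext rfl)
    · have hBfi : Bf (gcol (merge A)) (d vm - A um vm) (i:ℕ) = A ⟨(i:ℕ), by omega⟩ vm := by
        exact (hBf (i:ℕ) hi).symm.trans (dif_pos hi)
      by_cases hj1 : (j:ℕ) = m
      · have : j = um := Fin.ext hj1
        subst this
        rw [sp_lm (merge A) _ _ hi]
        have h5 : gcol (merge A) (i:ℕ)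
            = A ⟨(i:ℕ), by omega⟩ um + A ⟨(i:ℕ), by omega⟩ vm := by
          rw [gcol_lt (merge A) _ hi, merge_lt_last A ⟨(i:ℕ), by omega⟩ hi]
          have e1 : (⟨(i:ℕ), by omega⟩ : Fin (m+1)).castSucc
              = (⟨(i:ℕ), by omega⟩ : Fin (m+2)) := Fin.ext rfl
          rw [e1]
        have h6 : A ⟨(i:ℕ), by omega⟩ um = A i um :=
          congrArg (fun x => A x um) (Fin.ext rfl)
        have h7 : A ⟨(i:ℕ), by omega⟩ vm = A i vm :=
          congrArg (fun x => A x vm) (Fin.ext rfl)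
        have h8 := Bf_add_Cf (gcol (merge A)) (d vm - A um vm) (i:ℕ)
        omega
      · have : j = vm := Fin.ext (by simp only [vm_val]; omega)
        subst this
        rw [sp_lv (merge A) _ _ hi]
        exact hBfi.trans (congrArg (fun x => A x vm) (Fin.ext rfl))
  · by_cases hi1 : (i:ℕ) = m
    · have : i = um := Fin.ext hi1
      subst this
      by_cases hj : (j:ℕ) < m
      · rw [sp_ml (merge A) _ _ hj]
        have hBfj : Bf (gcol (merge A)) (d vm - A um vm) (j:ℕ) = A ⟨(j:ℕ), by omega⟩ vm :=
          (hBf (j:ℕ) hj).symm.trans (dif_pos hj)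
        have h5 : gcol (merge A) (j:ℕ)
            = A ⟨(j:ℕ), by omega⟩ um + A ⟨(j:ℕ), by omega⟩ vm := by
          rw [gcol_lt (merge A) _ hj, merge_lt_last A ⟨(j:ℕ), by omega⟩ hj]
          have e1 : (⟨(j:ℕ), by omega⟩ : Fin (m+1)).castSucc
              = (⟨(j:ℕ), by omega⟩ : Fin (m+2)) := Fin.ext rfl
          rw [e1]
        have h6 : A ⟨(j:ℕ), by omega⟩ um = A um j := by
          rw [hsym]
        have h7 := Bf_add_Cf (gcol (merge A)) (d vm - A um vm) (j:ℕ)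
        omega
      · by_cases hj1 : (j:ℕ) = m
        · have : j = um := Fin.ext hj1
          subst this
          rw [sp_mm]
          exact (hdiag um).symm
        · have : j = vm := Fin.ext (by simp only [vm_val]; omega)
          subst this
          rw [sp_mv]
    · have : i = vm := Fin.ext (by simp only [vm_val]; omega)
      subst this
      by_cases hj : (j:ℕ) < m
      · rw [sp_vl (merge A) _ _ hj]
        have hBfj : Bf (gcol (merge A)) (d vm - A um vm) (j:ℕ) = A ⟨(j:ℕ), by omega⟩ vm :=
          (hBf (j:ℕ) hj).symm.trans (dif_pos hj)
        rw [hBfj, hsym]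
      · by_cases hj1 : (j:ℕ) = m
        · have : j = um := Fin.ext hj1
          subst this
          rw [sp_vm]
          exact hsym um vm
        · have : j = vm := Fin.ext (by simp only [vm_val]; omega)
          subst this
          rw [sp_vv]
          exact (hdiag vm).symm

lemma merge_split (hsym : ∀ i j, A' i j = A' j i) (hdiag : ∀ i, A' i i = 0) :
    merge (split A' s k) = A' := by
  funext i j
  have hi2 := i.isLt
  have hj2 := j.isLt
  by_cases hi : (i:ℕ) < m
  · by_cases hj : (j:ℕ) < m
    · rw [merge_lt_lt (split A' s k) i j hi hj, sp_ll A' s k (by simpa using hi) (by simpa using hj)]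
      exact congrArg₂ A' (Fin.ext rfl) (Fin.ext rfl)
    · have : j = Fin.last m := Fin.ext (by simp only [Fin.val_last]; omega)
      subst this
      rw [merge_lt_last (split A' s k) i hi]
      have h1 : split A' s k i.castSucc um = Cf (gcol A') s (i:ℕ) :=
        sp_lm A' s k (by simpa using hi)
      have h2 : split A' s k i.castSucc vm = Bf (gcol A') s (i:ℕ) :=
        sp_lv A' s k (by simpa using hi)
      have h3 := Bf_add_Cf (gcol A') s (i:ℕ)
      have h4 : gcol A' (i:ℕ) = A' ⟨(i:ℕ), by omega⟩ (Fin.last m) := gcol_lt A' _ hi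
      have h5 : A' ⟨(i:ℕ), by omega⟩ (Fin.last m) = A' i (Fin.last m) :=
        congrArg (fun x => A' x (Fin.last m)) (Fin.ext rfl)
      omega
  · have : i = Fin.last m := Fin.ext (by simp only [Fin.val_last]; omega)
    subst this
    by_cases hj : (j:ℕ) < m
    · rw [merge_last_lt (split A' s k) j hj]
      have h1 : split A' s k j.castSucc um = Cf (gcol A') s (j:ℕ) :=
        sp_lm A' s k (by simpa using hj)
      have h2 : split A' s k j.castSucc vm = Bf (gcol A') s (j:ℕ) :=
        sp_lv A' s k (by simpa using hj)
      have h3 := Bf_add_Cf (gcol A') s (j:ℕ)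
      have h4 : gcol A' (j:ℕ) = A' ⟨(j:ℕ), by omega⟩ (Fin.last m) := gcol_lt A' _ hj
      have h5 : A' ⟨(j:ℕ), by omega⟩ (Fin.last m) = A' (Fin.last m) j := by
        rw [hsym]
      omega
    · have : j = Fin.last m := Fin.ext (by simp only [Fin.val_last]; omega)
      subst this
      rw [merge_last_last]
      exact (hdiag _).symm


lemma finiteOk (n : ℕ) (dd : Fin n → ℕ) : Finite {A : Fin n → Fin n → ℕ // Ok n dd A} := by
  have hbd : ∀ (A : {A : Fin n → Fin n → ℕ // Ok n dd A}) (i j : Fin n),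
      A.1 i j < dd i + 1 := by
    intro A i j
    have hdeg := A.2.2.2.2 i
    have : A.1 i j ≤ ∑ j', A.1 i j' :=
      Finset.single_le_sum (fun j' _ => Nat.zero_le _) (mem_univ j)
    omega
  apply Finite.of_injective
    (fun A : {A : Fin n → Fin n → ℕ // Ok n dd A} =>
      (fun i j => (⟨A.1 i j, hbd A i j⟩ : Fin (dd i + 1)) : (i : Fin n) → Fin n → Fin (dd i + 1)))
  intro A B h
  apply Subtype.ext
  funext i j
  exact congrArg Fin.val (congrFun (congrFun h i) j)

lemma main (m : ℕ) (d : Fin (m + 2) → ℕ) :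
    ncCount (m + 2) d =
      ∑ t ∈ Finset.range (min (d (um (m := m))) (d (vm (m := m))) + 1),
        ncCount (m + 1) (Fin.snoc (fun i : Fin m => d i.castSucc.castSucc)
          (max (d (um (m := m))) (d (vm (m := m))) -
            min (d (um (m := m))) (d (vm (m := m))) + 2 * t)) := by
  show ncCount (m + 2) d =
      ∑ t ∈ Finset.range (min (d um) (d vm) + 1),
        ncCount (m + 1) (Fin.snoc (fun i : Fin m => d i.castSucc.castSucc)
          (max (d um) (d vm) - min (d um) (d vm) + 2 * t))
  have hbij : Function.Bijective
      (fun x : Σ t : Fin (min (d um) (d vm) + 1),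
          {A' : Fin (m+1) → Fin (m+1) → ℕ // Ok (m+1)
            (Fin.snoc (fun i : Fin m => d i.castSucc.castSucc)
              (max (d um) (d vm) - min (d um) (d vm) + 2 * (t:ℕ))) A'} =>
        (⟨split x.2.1 (d vm - (min (d um) (d vm) - (x.1:ℕ))) (min (d um) (d vm) - (x.1:ℕ)),
          split_ok x.2.1 d (x.1:ℕ) (by have := x.1.isLt; omega) x.2.2⟩
          : {A : Fin (m+2) → Fin (m+2) → ℕ // Ok (m+2) d A})) := by
    constructor
    · rintro ⟨t1, A1, h1⟩ ⟨t2, A2, h2⟩ hxy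
      have hmat := congrArg Subtype.val hxy
      simp only at hmat
      have hkk : min (d um) (d vm) - (t1:ℕ) = min (d um) (d vm) - (t2:ℕ) := by
        have h := congrFun (congrFun hmat um) vm
        rwa [sp_mv, sp_mv] at h
      have ht : t1 = t2 := Fin.ext (by have := t1.isLt; have := t2.isLt; omega)
      subst ht
      have hAeq : A1 = A2 := by
        have e1 := merge_split A1 (d vm - (min (d um) (d vm) - (t1:ℕ)))
          (min (d um) (d vm) - (t1:ℕ)) h1.1 h1.2.1
        have e2 := merge_split A2 (d vm - (min (d um) (d vm) - (t1:ℕ)))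
          (min (d um) (d vm) - (t1:ℕ)) h2.1 h2.2.1
        rw [← e1, ← e2, hmat]
      subst hAeq
      rfl
    · rintro ⟨A, hA⟩
      have hk1 := k_le_left d A hA
      have hk2 := k_le_right d A hA
      refine ⟨⟨⟨min (d um) (d vm) - A um vm, by omega⟩, merge A, ?_⟩, ?_⟩
      · show Ok (m+1) (Fin.snoc (fun i : Fin m => d i.castSucc.castSucc)
            (max (d um) (d vm) - min (d um) (d vm)
              + 2 * (min (d um) (d vm) - A um vm))) (merge A)
        have heq : max (d um) (d vm) - min (d um) (d vm)
            + 2 * (min (d um) (d vm) - A um vm) = d um + d vm - 2 * A um vm := by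
          omega
        rw [heq]
        exact merge_ok d A hA
      · apply Subtype.ext
        show split (merge A)
            (d vm - (min (d um) (d vm) - (min (d um) (d vm) - A um vm)))
            (min (d um) (d vm) - (min (d um) (d vm) - A um vm)) = A
        have hkk : min (d um) (d vm) - (min (d um) (d vm) - A um vm) = A um vm := by
          omega
        rw [hkk]
        exact split_merge d A hA
  have hcard := Nat.card_eq_of_bijective _ hbij
  rw [ncCount_eq, ← hcard]
  haveI hfin : ∀ t : Fin (min (d um) (d vm) + 1),
      Finite {A' : Fin (m+1) → Fin (m+1) → ℕ // Ok (m+1)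
        (Fin.snoc (fun i : Fin m => d i.castSucc.castSucc)
          (max (d um) (d vm) - min (d um) (d vm) + 2 * (t:ℕ))) A'} :=
    fun t => finiteOk _ _
  letI hft : ∀ t : Fin (min (d um) (d vm) + 1),
      Fintype {A' : Fin (m+1) → Fin (m+1) → ℕ // Ok (m+1)
        (Fin.snoc (fun i : Fin m => d i.castSucc.castSucc)
          (max (d um) (d vm) - min (d um) (d vm) + 2 * (t:ℕ))) A'} :=
    fun t => Fintype.ofFinite _
  rw [Nat.card_eq_fintype_card, Fintype.card_sigma]
  rw [← Fin.sum_univ_eq_sum_range (fun t => ncCount (m + 1)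
    (Fin.snoc (fun i : Fin m => d i.castSucc.castSucc)
      (max (d um) (d vm) - min (d um) (d vm) + 2 * t))) (min (d um) (d vm) + 1)]
  refine Finset.sum_congr rfl fun t _ => ?_
  rw [ncCount_eq, Nat.card_eq_fintype_card]

lemma base (d : Fin 1 → ℕ) : ncCount 1 d = if d 0 = 0 then 1 else 0 := by
  rw [ncCount_eq]
  by_cases h : d 0 = 0
  · rw [if_pos h, Nat.card_eq_one_iff_unique]
    constructor
    · constructor
      intro A B
      apply Subtype.ext
      funext i j
      have hi : i = 0 := Subsingleton.elim _ _
      have hj : j = 0 := Subsingleton.elim _ _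
      subst hi hj
      rw [A.2.2.1 0, B.2.2.1 0]
    · refine ⟨⟨fun _ _ => 0, fun _ _ => rfl, fun _ => rfl, ?_, ?_⟩⟩
      · intro a b c e hab hbc hce
        have : a = b := Subsingleton.elim _ _
        subst this
        exact absurd hab (lt_irrefl _)
      · intro i
        have : i = 0 := Subsingleton.elim _ _
        subst this
        simp [h]
  · rw [if_neg h, Nat.card_eq_zero]
    refine Or.inl ⟨fun A => h ?_⟩
    have h1 := A.2.2.2.2 0
    have h2 := A.2.2.1 0
    rw [Fin.sum_univ_one, h2] at h1
    omega

end NC11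


/-- c_d = Σ_{j=|d_{m−1}−d_m|, step 2}^{d_{m−1}+d_m}
c_{(d_1,...,d_{m−2},j)} for m ≥ 2, with c_{(d)} = 1 if d = 0 and 0 otherwise. -/
theorem stmt11 :
    (∀ (m : ℕ) (d : Fin (m + 2) → ℕ),
      ncCount (m + 2) d =
        ∑ t ∈ Finset.range (min (d ⟨m, by omega⟩) (d ⟨m + 1, by omega⟩) + 1),
          ncCount (m + 1) (Fin.snoc (fun i : Fin m => d i.castSucc.castSucc)
            (max (d ⟨m, by omega⟩) (d ⟨m + 1, by omega⟩) -
              min (d ⟨m, by omega⟩) (d ⟨m + 1, by omega⟩) + 2 * t))) ∧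
    (∀ d : Fin 1 → ℕ, ncCount 1 d = if d 0 = 0 then 1 else 0) :=
  ⟨NC11.main, NC11.base⟩
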